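/- Let 𝒳 = ℬ × 𝒞 be a finite set with |ℬ| = s, |𝒞| = t, equipped with the metric d((b,c),(b',c')) = 0 if (b,c)=(b',c'), d = r if b=b' but c≠c', and d = 1 otherwise, where 0 < r < 1/2. Then for any probability distributions P, Q on 𝒳, d_EM(P, Q) ≤ r·‖P - Q‖_1 + ‖M_ℬ(P) - M_ℬ(Q)‖_1, where M_ℬ(P)(b) = Σ_{c∈𝒞} P(b,c) is the marginal of P on ℬ. -/

import Mathlib

open Finset

/-- in the clustered metric space `ℬ × 𝒞`, the earth mover's
distance is bounded by `r·‖P - Q‖₁ + ‖M_ℬ(P) - M_ℬ(Q)‖₁`. -/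
theorem clustered_emd_upper_bound {B C : Type*} [Fintype B] [Fintype C]
    [DecidableEq B] [DecidableEq C]
    (r : ℝ) (hr0 : 0 < r) (hr : r < 1 / 2)
    (P Q : B × C → ℝ)
    (hP0 : ∀ z, 0 ≤ P z) (hP1 : ∑ z, P z = 1)
    (hQ0 : ∀ z, 0 ≤ Q z) (hQ1 : ∑ z, Q z = 1) :
    sInf {c : ℝ | ∃ Cpl : (B × C) → (B × C) → ℝ, (∀ z w, 0 ≤ Cpl z w) ∧
        (∀ z, ∑ w, Cpl z w = P z) ∧ (∀ w, ∑ z, Cpl z w = Q w) ∧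
        c = ∑ z, ∑ w, Cpl z w *
          (if z = w then 0 else if z.1 = w.1 then r else 1)}
      ≤ r * (∑ z, |P z - Q z|)
        + ∑ b, |(∑ c, P (b, c)) - ∑ c, Q (b, c)| := by
  classical
  set p : B × C → ℝ := fun z => P z - min (P z) (Q z) with hpdef
  set q : B × C → ℝ := fun z => Q z - min (P z) (Q z) with hqdef
  set pb : B → ℝ := fun b => ∑ c, p (b, c) with hpbdef
  set qb : B → ℝ := fun b => ∑ c, q (b, c) with hqbdef
  set al : B → ℝ := fun b => min (pb b) (qb b) with haldef
  set A : ℝ := ∑ b, (pb b - al b) with hAdef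
  have hp0 : ∀ z, 0 ≤ p z := fun z => sub_nonneg.2 (min_le_left _ _)
  have hq0 : ∀ z, 0 ≤ q z := fun z => sub_nonneg.2 (min_le_right _ _)
  have hpb0 : ∀ b, 0 ≤ pb b := fun b => Finset.sum_nonneg fun c _ => hp0 _
  have hqb0 : ∀ b, 0 ≤ qb b := fun b => Finset.sum_nonneg fun c _ => hq0 _
  have hal0 : ∀ b, 0 ≤ al b := fun b => le_min (hpb0 b) (hqb0 b)
  have halp : ∀ b, al b ≤ pb b := fun b => min_le_left _ _
  have halq : ∀ b, al b ≤ qb b := fun b => min_le_right _ _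
  have hple : ∀ z : B × C, p z ≤ pb z.1 := by
    intro z
    have := Finset.single_le_sum (f := fun c => p (z.1, c))
      (fun c _ => hp0 _) (Finset.mem_univ z.2)
    exact this
  have hqle : ∀ w : B × C, q w ≤ qb w.1 := by
    intro w
    have := Finset.single_le_sum (f := fun c => q (w.1, c))
      (fun c _ => hq0 _) (Finset.mem_univ w.2)
    exact this
  have hA0 : 0 ≤ A := Finset.sum_nonneg fun b _ => sub_nonneg.2 (halp b)
  have hratp : ∀ b, al b / pb b ≤ 1 := by
    intro b
    rcases eq_or_lt_of_le (hpb0 b) with h | h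
    · simp [← h]
    · exact div_le_one_of_le₀ (halp b) h.le
  have hratq : ∀ b, al b / qb b ≤ 1 := by
    intro b
    rcases eq_or_lt_of_le (hqb0 b) with h | h
    · simp [← h]
    · exact div_le_one_of_le₀ (halq b) h.le
  have hratp0 : ∀ b, 0 ≤ al b / pb b := fun b => div_nonneg (hal0 b) (hpb0 b)
  have hratq0 : ∀ b, 0 ≤ al b / qb b := fun b => div_nonneg (hal0 b) (hqb0 b)
  have hsum_pb : ∑ b, pb b = ∑ z, p z := by
    simp only [hpbdef]
    exact (Fintype.sum_prod_type (f := p)).symm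
  have hsum_qb : ∑ b, qb b = ∑ z, q z := by
    simp only [hqbdef]
    exact (Fintype.sum_prod_type (f := q)).symm
  have hpq_sum : ∑ z, p z = ∑ z, q z := by
    simp only [hpdef, hqdef, Finset.sum_sub_distrib, hP1, hQ1]
  have hAq : A = ∑ b, (qb b - al b) := by
    rw [hAdef, Finset.sum_sub_distrib, Finset.sum_sub_distrib, hsum_pb, hsum_qb, hpq_sum]
  -- cancellation lemmas
  have hzp : ∀ b, pb b = 0 → al b = 0 := fun b h =>
    le_antisymm (h ▸ halp b) (hal0 b)
  have hzq : ∀ b, qb b = 0 → al b = 0 := fun b h =>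
    le_antisymm (h ▸ halq b) (hal0 b)
  have L2 : ∀ b, qb b * (al b / (pb b * qb b)) = al b / pb b := by
    intro b
    by_cases hq' : qb b = 0
    · simp [hq', hzq b hq']
    · by_cases hp' : pb b = 0
      · simp [hp', hzp b hp']
      · field_simp
  have L2' : ∀ b, pb b * (al b / (pb b * qb b)) = al b / qb b := by
    intro b
    by_cases hp' : pb b = 0
    · simp [hp', hzp b hp']
    · by_cases hq' : qb b = 0
      · simp [hq', hzq b hq']
      · field_simp
  have hcancp : ∀ b, pb b * (al b / pb b) = al b := by
    intro b
    by_cases hp' : pb b = 0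
    · simp [hp', hzp b hp']
    · field_simp
  have hcancq : ∀ b, qb b * (al b / qb b) = al b := by
    intro b
    by_cases hq' : qb b = 0
    · simp [hq', hzq b hq']
    · field_simp
  -- row sums of middle part
  have hWrow : ∀ z : B × C,
      (∑ w : B × C, if z.1 = w.1 then p z * q w * (al z.1 / (pb z.1 * qb z.1)) else 0)
        = p z * (al z.1 / pb z.1) := by
    intro z
    rw [Fintype.sum_prod_type]
    have h1 : ∀ b' : B, (∑ c' : C, if z.1 = b' then p z * q (b', c') * (al z.1 / (pb z.1 * qb z.1)) else 0)
        = if z.1 = b' then p z * (qb b' * (al z.1 / (pb z.1 * qb z.1))) else 0 := by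
      intro b'
      by_cases h : z.1 = b'
      · simp only [h, if_true]
        simp only [hqbdef, Finset.sum_mul, Finset.mul_sum]
        exact Finset.sum_congr rfl fun c' _ => by ring
      · simp [h]
    simp only [h1, Finset.sum_ite_eq, Finset.mem_univ, if_true]
    rw [L2 z.1]
  have hWcol : ∀ w : B × C,
      (∑ z : B × C, if z.1 = w.1 then p z * q w * (al z.1 / (pb z.1 * qb z.1)) else 0)
        = q w * (al w.1 / qb w.1) := by
    intro w
    rw [Fintype.sum_prod_type]
    have h1 : ∀ b : B, (∑ c : C, if b = w.1 then p (b, c) * q w * (al b / (pb b * qb b)) else 0)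
        = if b = w.1 then q w * (pb b * (al b / (pb b * qb b))) else 0 := by
      intro b
      by_cases h : b = w.1
      · simp only [h, if_true]
        simp only [hpbdef, Finset.sum_mul, Finset.mul_sum]
        exact Finset.sum_congr rfl fun c _ => by ring
      · simp [h]
    simp only [h1, Finset.sum_ite_eq', Finset.mem_univ, if_true]
    rw [L2' w.1]
  -- residual sums
  have hUrow : ∀ b, (∑ c, p (b, c) * (1 - al b / pb b)) = pb b - al b := by
    intro b
    rw [← Finset.sum_mul]
    have : (∑ c, p (b, c)) = pb b := by rw [hpbdef]
    rw [this]
    by_cases hp' : pb b = 0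
    · simp [hp', hzp b hp']
    · field_simp
  have hVrow : ∀ b, (∑ c, q (b, c) * (1 - al b / qb b)) = qb b - al b := by
    intro b
    rw [← Finset.sum_mul]
    have : (∑ c, q (b, c)) = qb b := by rw [hqbdef]
    rw [this]
    by_cases hq' : qb b = 0
    · simp [hq', hzq b hq']
    · field_simp
  have hUsum : (∑ z, p z * (1 - al z.1 / pb z.1)) = A := by
    rw [Fintype.sum_prod_type]
    simp only [hUrow]
    exact hAdef.symm
  have hVsum : (∑ w, q w * (1 - al w.1 / qb w.1)) = A := by
    rw [Fintype.sum_prod_type]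
    simp only [hVrow]
    exact hAq.symm
  have hAzero : A = 0 → ∀ b, pb b = al b := by
    intro hA b
    have h0 : ∑ b, (pb b - al b) = 0 := by rw [← hAdef]; exact hA
    have := (Finset.sum_eq_zero_iff_of_nonneg
      (fun b _ => sub_nonneg.2 (halp b))).1 h0 b (Finset.mem_univ b)
    linarith
  have hXrow : ∀ z : B × C,
      p z * (1 - al z.1 / pb z.1) * A / A = p z - p z * (al z.1 / pb z.1) := by
    intro z
    by_cases hA : A = 0
    · rw [hA]
      by_cases hp' : pb z.1 = 0
      · have hz : p z = 0 := le_antisymm (hp' ▸ hple z) (hp0 z)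
        simp [hz]
      · have : al z.1 / pb z.1 = 1 := by
          rw [← hAzero hA z.1]; exact div_self hp'
        simp [this]
    · rw [mul_div_assoc, div_self hA, mul_one]
      ring
  have hXcol : ∀ w : B × C,
      q w * (1 - al w.1 / qb w.1) * A / A = q w - q w * (al w.1 / qb w.1) := by
    intro w
    by_cases hA : A = 0
    · rw [hA]
      by_cases hq' : qb w.1 = 0
      · have hz : q w = 0 := le_antisymm (hq' ▸ hqle w) (hq0 w)
        simp [hz]
      · have : al w.1 / qb w.1 = 1 := by
          have h1 : qb w.1 = al w.1 := by
            have h2 := hAzero hA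
            have h3 : ∑ b, (qb b - al b) = 0 := by rw [← hAq]; exact hA
            have := (Finset.sum_eq_zero_iff_of_nonneg
              (fun b _ => sub_nonneg.2 (halq b))).1 h3 w.1 (Finset.mem_univ w.1)
            linarith
          rw [← h1]; exact div_self hq'
        simp [this]
    · rw [mul_div_assoc, div_self hA, mul_one]
      ring
  have SW : (∑ z, p z * (al z.1 / pb z.1)) = ∑ b, al b := by
    rw [Fintype.sum_prod_type]
    refine Finset.sum_congr rfl fun b _ => ?_
    dsimp only
    rw [← Finset.sum_mul]
    have : (∑ c, p (b, c)) = pb b := by rw [hpbdef]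
    rw [this, hcancp]
  -- the coupling
  set K : (B × C) → (B × C) → ℝ := fun z w =>
    (if z = w then min (P z) (Q z) else 0)
    + (if z.1 = w.1 then p z * q w * (al z.1 / (pb z.1 * qb z.1)) else 0)
    + p z * (1 - al z.1 / pb z.1) * (q w * (1 - al w.1 / qb w.1)) / A
    with hKdef
  have hK0 : ∀ z w, 0 ≤ K z w := by
    intro z w
    have h1 : (0:ℝ) ≤ if z = w then min (P z) (Q z) else 0 := by
      split
      · exact le_min (hP0 z) (hQ0 z)
      · exact le_refl 0
    have h2 : (0:ℝ) ≤ if z.1 = w.1 then p z * q w * (al z.1 / (pb z.1 * qb z.1)) else 0 := by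
      split
      · exact mul_nonneg (mul_nonneg (hp0 z) (hq0 w))
          (div_nonneg (hal0 _) (mul_nonneg (hpb0 _) (hqb0 _)))
      · exact le_refl 0
    have h3 : (0:ℝ) ≤ p z * (1 - al z.1 / pb z.1) * (q w * (1 - al w.1 / qb w.1)) / A :=
      div_nonneg (mul_nonneg (mul_nonneg (hp0 z) (sub_nonneg.2 (hratp _)))
        (mul_nonneg (hq0 w) (sub_nonneg.2 (hratq _)))) hA0
    simp only [hKdef]
    exact add_nonneg (add_nonneg h1 h2) h3
  have hKrow : ∀ z, ∑ w, K z w = P z := by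
    intro z
    simp only [hKdef]
    rw [Finset.sum_add_distrib, Finset.sum_add_distrib]
    have e1 : (∑ w : B × C, if z = w then min (P z) (Q z) else 0) = min (P z) (Q z) := by
      simp
    have e3 : (∑ w : B × C, p z * (1 - al z.1 / pb z.1) * (q w * (1 - al w.1 / qb w.1)) / A)
        = p z - p z * (al z.1 / pb z.1) := by
      rw [← Finset.sum_div, ← Finset.mul_sum, hVsum]
      exact hXrow z
    rw [e1, hWrow z, e3]
    simp only [hpdef]
    ring
  have hKcol : ∀ w, ∑ z, K z w = Q w := by
    intro w
    simp only [hKdef]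
    rw [Finset.sum_add_distrib, Finset.sum_add_distrib]
    have e1 : (∑ z : B × C, if z = w then min (P z) (Q z) else 0) = min (P w) (Q w) := by
      simp
    have e3 : (∑ z : B × C, p z * (1 - al z.1 / pb z.1) * (q w * (1 - al w.1 / qb w.1)) / A)
        = q w - q w * (al w.1 / qb w.1) := by
      rw [← Finset.sum_div, ← Finset.sum_mul, hUsum, mul_comm]
      exact hXcol w
    rw [e1, hWcol w, e3]
    simp only [hqdef]
    ring
  refine csInf_le_of_le ⟨0, fun c hc => ?_⟩ ⟨K, hK0, hKrow, hKcol, rfl⟩ ?_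
  · obtain ⟨Cpl, h0, -, -, rfl⟩ := hc
    refine Finset.sum_nonneg fun z _ => Finset.sum_nonneg fun w _ =>
      mul_nonneg (h0 z w) ?_
    split_ifs <;> linarith
  -- cost bound
  have hsplit : (∑ z, ∑ w, K z w * (if z = w then 0 else if z.1 = w.1 then r else 1)) =
      (∑ z : B × C, ∑ w : B × C, (if z = w then min (P z) (Q z) else 0) *
        (if z = w then 0 else if z.1 = w.1 then r else 1))
    + (∑ z : B × C, ∑ w : B × C,
        (if z.1 = w.1 then p z * q w * (al z.1 / (pb z.1 * qb z.1)) else 0) *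
        (if z = w then 0 else if z.1 = w.1 then r else 1))
    + (∑ z : B × C, ∑ w : B × C,
        (p z * (1 - al z.1 / pb z.1) * (q w * (1 - al w.1 / qb w.1)) / A) *
        (if z = w then 0 else if z.1 = w.1 then r else 1)) := by
    simp only [hKdef, add_mul, Finset.sum_add_distrib]
  rw [hsplit]
  have h1 : (∑ z : B × C, ∑ w : B × C, (if z = w then min (P z) (Q z) else 0) *
      (if z = w then 0 else if z.1 = w.1 then r else 1)) = 0 := by
    refine Finset.sum_eq_zero fun z _ => Finset.sum_eq_zero fun w _ => ?_
    by_cases h : z = w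
    · simp [h]
    · simp [h]
  rw [h1]
  -- term 2 bound
  have hT2nn : ∀ z w : B × C, 0 ≤ p z * q w * (al z.1 / (pb z.1 * qb z.1)) :=
    fun z w => mul_nonneg (mul_nonneg (hp0 z) (hq0 w))
      (div_nonneg (hal0 _) (mul_nonneg (hpb0 _) (hqb0 _)))
  have h2 : (∑ z : B × C, ∑ w : B × C,
      (if z.1 = w.1 then p z * q w * (al z.1 / (pb z.1 * qb z.1)) else 0) *
      (if z = w then 0 else if z.1 = w.1 then r else 1)) ≤ r * ∑ b, al b := by
    have step : (∑ z : B × C, ∑ w : B × C,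
        (if z.1 = w.1 then p z * q w * (al z.1 / (pb z.1 * qb z.1)) else 0) *
        (if z = w then 0 else if z.1 = w.1 then r else 1)) ≤
        ∑ z : B × C, ∑ w : B × C,
        (if z.1 = w.1 then p z * q w * (al z.1 / (pb z.1 * qb z.1)) else 0) * r := by
      refine Finset.sum_le_sum fun z _ => Finset.sum_le_sum fun w _ => ?_
      by_cases h : z.1 = w.1
      · simp only [h, if_true]
        by_cases h' : z = w
        · simp only [h', if_true]
          rw [mul_zero]
          exact mul_nonneg (hT2nn w w) hr0.le
        · simp [h', h]
      · simp [h]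
    refine le_trans step ?_
    have e2 : (∑ z : B × C, ∑ w : B × C,
        (if z.1 = w.1 then p z * q w * (al z.1 / (pb z.1 * qb z.1)) else 0) * r)
        = (∑ b, al b) * r := by
      have einner : ∀ z : B × C, (∑ w : B × C,
          (if z.1 = w.1 then p z * q w * (al z.1 / (pb z.1 * qb z.1)) else 0) * r)
          = p z * (al z.1 / pb z.1) * r := fun z => by
        rw [← Finset.sum_mul, hWrow z]
      simp only [einner]
      rw [← Finset.sum_mul, SW]
    rw [e2, mul_comm]
  -- term 3 bound
  have hT3nn : ∀ z w : B × C,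
      0 ≤ p z * (1 - al z.1 / pb z.1) * (q w * (1 - al w.1 / qb w.1)) / A := fun z w =>
    div_nonneg (mul_nonneg (mul_nonneg (hp0 z) (sub_nonneg.2 (hratp _)))
      (mul_nonneg (hq0 w) (sub_nonneg.2 (hratq _)))) hA0
  have h3 : (∑ z : B × C, ∑ w : B × C,
      (p z * (1 - al z.1 / pb z.1) * (q w * (1 - al w.1 / qb w.1)) / A) *
      (if z = w then 0 else if z.1 = w.1 then r else 1))
      ≤ (∑ z, p z) - ∑ b, al b := by
    have step : (∑ z : B × C, ∑ w : B × C,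
        (p z * (1 - al z.1 / pb z.1) * (q w * (1 - al w.1 / qb w.1)) / A) *
        (if z = w then 0 else if z.1 = w.1 then r else 1))
        ≤ ∑ z : B × C, ∑ w : B × C,
          p z * (1 - al z.1 / pb z.1) * (q w * (1 - al w.1 / qb w.1)) / A := by
      refine Finset.sum_le_sum fun z _ => Finset.sum_le_sum fun w _ => ?_
      have hd : (if z = w then (0:ℝ) else if z.1 = w.1 then r else 1) ≤ 1 := by
        split_ifs <;> linarith
      calc (p z * (1 - al z.1 / pb z.1) * (q w * (1 - al w.1 / qb w.1)) / A) *
            (if z = w then (0:ℝ) else if z.1 = w.1 then r else 1)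
          ≤ (p z * (1 - al z.1 / pb z.1) * (q w * (1 - al w.1 / qb w.1)) / A) * 1 :=
            mul_le_mul_of_nonneg_left hd (hT3nn z w)
        _ = p z * (1 - al z.1 / pb z.1) * (q w * (1 - al w.1 / qb w.1)) / A := mul_one _
    refine le_trans step ?_
    have erow : ∀ z : B × C, (∑ w : B × C,
        p z * (1 - al z.1 / pb z.1) * (q w * (1 - al w.1 / qb w.1)) / A)
        = p z - p z * (al z.1 / pb z.1) := fun z => by
      rw [← Finset.sum_div, ← Finset.mul_sum, hVsum]
      exact hXrow z
    simp only [erow]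
    rw [Finset.sum_sub_distrib, SW]
  -- put pieces together
  have halsum : (∑ b, al b) ≤ ∑ z, p z := by
    rw [← hsum_pb]
    exact Finset.sum_le_sum fun b _ => halp b
  have hpabs : (∑ z, p z) ≤ ∑ z, |P z - Q z| := by
    refine Finset.sum_le_sum fun z _ => ?_
    simp only [hpdef]
    rcases le_total (P z) (Q z) with h | h
    · rw [min_eq_left h]
      simp [abs_nonneg]
    · rw [min_eq_right h]
      exact le_abs_self _
  have hMb : ∀ b, pb b - qb b = (∑ c, P (b, c)) - ∑ c, Q (b, c) := by
    intro b
    simp only [hpbdef, hqbdef, hpdef, hqdef, Finset.sum_sub_distrib]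
    ring
  have hcross : (∑ z, p z) - (∑ b, al b) ≤ ∑ b, |(∑ c, P (b, c)) - ∑ c, Q (b, c)| := by
    rw [← hsum_pb, ← Finset.sum_sub_distrib]
    refine Finset.sum_le_sum fun b _ => ?_
    rw [← hMb b]
    rcases le_total (pb b) (qb b) with h | h
    · have : al b = pb b := min_eq_left h
      rw [this]
      simp [abs_nonneg]
    · have : al b = qb b := min_eq_right h
      rw [this]
      exact le_abs_self _
  have hr2 : r * (∑ b, al b) ≤ r * ∑ z, |P z - Q z| :=
    mul_le_mul_of_nonneg_left (le_trans halsum hpabs) hr0.le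
  linarith
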